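/- arXiv:1212.5951 — 2 statements merged into one kernel-verified Lean document; each statement's English description precedes it below -/
import Mathlib

section
/- Let X ⊆ A^{Σ*} be a sofic tree shift and let τ : X → X be a cellular automaton. If τ is injective then τ is surjective. -/
/-! Common definitions: configurations over the regular rooted tree `Σ*`
(words = `List Sg`), the shift action, tree shifts, blocks, shifts of finite
type, cellular automata, sofic tree shifts, unrestricted Rabin automata. -/

/-- The shift action: `f^w (w') = f (w ++ w')`. -/
def shiftMap {Sg A : Type} (f : List Sg → A) (w : List Sg) : List Sg → A :=
  fun w' => f (w ++ w')

/-- The orbit `{f^w : w ∈ Σ*}` of a configuration under the shift action. -/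
def shiftOrbit {Sg A : Type} (f : List Sg → A) : Set (List Sg → A) :=
  Set.range (shiftMap f)

/-- A configuration is regular if its orbit under the shift action is finite. -/
def IsRegularConfig {Sg A : Type} (f : List Sg → A) : Prop :=
  (shiftOrbit f).Finite

/-- A tree shift: a subset of `A^{Σ*}` that is closed in the prodiscrete
topology and invariant under the shift action. -/
def IsTreeShift {Sg A : Type} [TopologicalSpace A] (X : Set (List Sg → A)) : Prop :=
  IsClosed X ∧ ∀ f ∈ X, ∀ w : List Sg, shiftMap f w ∈ X

/-- A block of size `n + 1`: a map `Δ_{n+1} → A`, where `Δ_k` is the set of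
words of length `< k` (so blocks have size `≥ 1`). -/
def TreeBlock (Sg A : Type) : Type :=
  (n : ℕ) × ({w : List Sg // w.length < n + 1} → A)

/-- The restriction of `f^w` to `Δ_{n+1}`, viewed as a block. -/
def blockAt {Sg A : Type} (f : List Sg → A) (w : List Sg) (n : ℕ) : TreeBlock Sg A :=
  ⟨n, fun m => f (w ++ m.val)⟩

/-- `X(F)`: the set of configurations avoiding every block in `F`. -/
def avoids {Sg A : Type} (F : Set (TreeBlock Sg A)) : Set (List Sg → A) :=
  {f | ∀ (w : List Sg) (n : ℕ), blockAt f w n ∉ F}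

/-- A tree shift of finite type: `X = X(F)` for some finite set `F` of blocks. -/
def IsSFT {Sg A : Type} (X : Set (List Sg → A)) : Prop :=
  ∃ F : Set (TreeBlock Sg A), F.Finite ∧ X = avoids F

/-- A cellular automaton `τ : X → B^{Σ*}`: there are a finite memory set
`M ⊆ Σ*` and a local map `μ : A^M → B` with `τ(f)(w) = μ((f^w)|_M)`. -/
def IsCellularAutomaton {Sg A B : Type} (X : Set (List Sg → A))
    (τ : X → List Sg → B) : Prop :=
  ∃ (M : Finset (List Sg)) (μ : ({m : List Sg // m ∈ M} → A) → B),
    ∀ (f : X) (w : List Sg), τ f w = μ (fun m => f.val (w ++ m.val))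

/-- A sofic tree shift: the image of a tree shift of finite type under a
cellular automaton. -/
def IsSofic {Sg A : Type} (X : Set (List Sg → A)) : Prop :=
  ∃ (C : Type) (_ : Finite C) (Y : Set (List Sg → C)) (τ : Y → List Sg → A),
    IsSFT Y ∧ IsCellularAutomaton Y τ ∧ X = Set.range τ

/-- An unrestricted Rabin automaton: a nonempty finite state set `S` and a set
of transition bundles `𝒯 ⊆ S × A × S^Σ`. -/
structure URA (Sg A : Type) where
  S : Type
  [finS : Finite S]
  [neS : Nonempty S]
  T : Set (S × A × (Sg → S))

attribute [instance] URA.finS URA.neS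

/-- Acceptance of a configuration by an unrestricted Rabin automaton. -/
def URA.Accepts {Sg A : Type} (𝒜 : URA Sg A) (f : List Sg → A) : Prop :=
  ∃ α : List Sg → 𝒜.S,
    ∀ w : List Sg, (α w, f w, fun σ => α (w ++ [σ])) ∈ 𝒜.T

/-- `Sh_𝒜`: the set of configurations accepted by `𝒜`. -/
def URA.shift {Sg A : Type} (𝒜 : URA Sg A) : Set (List Sg → A) :=
  {f | 𝒜.Accepts f}

/-- `𝒜` is essential if every state is the source of some transition bundle. -/
def URA.Essential {Sg A : Type} (𝒜 : URA Sg A) : Prop :=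
  ∀ s : 𝒜.S, ∃ t ∈ 𝒜.T, t.1 = s

/-- `𝒜` is co-deterministic if for every terminal sequence and label there is
at most one transition bundle with that terminal sequence and label. -/
def URA.CoDeterministic {Sg A : Type} (𝒜 : URA Sg A) : Prop :=
  ∀ t ∈ 𝒜.T, ∀ t' ∈ 𝒜.T, t.2.1 = t'.2.1 → t.2.2 = t'.2.2 → t = t'

/-- `𝒜` is co-complete if for every terminal sequence and label there is at
least one transition bundle with that terminal sequence and label. -/
def URA.CoComplete {Sg A : Type} (𝒜 : URA Sg A) : Prop :=
  ∀ (s : Sg → 𝒜.S) (a : A), ∃ t ∈ 𝒜.T, t.2.1 = a ∧ t.2.2 = s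

/-- One step along a bundle path: some transition bundle has source `s` and
`σ`-terminal state `s'` for some `σ`. -/
def URA.Step {Sg A : Type} (𝒜 : URA Sg A) (s s' : 𝒜.S) : Prop :=
  ∃ t ∈ 𝒜.T, t.1 = s ∧ ∃ σ : Sg, t.2.2 σ = s'

/-- `𝒜` is strongly connected if any state can be joined to any other by a
bundle path (possibly empty). -/
def URA.StronglyConnected {Sg A : Type} (𝒜 : URA Sg A) : Prop :=
  ∀ s s' : 𝒜.S, Relation.ReflTransGen 𝒜.Step s s'

/-- A tree shift `X` is irreducible if for all blocks `p ∈ X_n`, `q ∈ X_m`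
there is `f ∈ X` with `f|_{Δ_n} = p` and, for every `w ∈ Σ^n`, some `v` with
`f|_{w v Δ_m} = w v · q`. -/
def IsIrreducibleShift {Sg A : Type} (X : Set (List Sg → A)) : Prop :=
  ∀ (n m : ℕ) (p q : List Sg → A),
    (∃ fp ∈ X, ∀ u : List Sg, u.length < n → fp u = p u) →
    (∃ fq ∈ X, ∀ u : List Sg, u.length < m → fq u = q u) →
    ∃ f ∈ X, (∀ u : List Sg, u.length < n → f u = p u) ∧
      ∀ w : List Sg, w.length = n → ∃ v : List Sg,
        ∀ u : List Sg, u.length < m → f (w ++ v ++ u) = q u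

/-- A subtree of `Σ*`: contains the root `ε` and is prefix-closed. -/
def IsSubtree {Sg : Type} (T : Set (List Sg)) : Prop :=
  ([] : List Sg) ∈ T ∧ ∀ u v : List Sg, u ++ v ∈ T → u ∈ T

/-- A full subtree: each vertex has either all of its children or none. -/
def IsFullSubtree {Sg : Type} (T : Set (List Sg)) : Prop :=
  IsSubtree T ∧ ∀ w ∈ T, (∀ σ : Sg, w ++ [σ] ∈ T) ∨ (∀ σ : Sg, w ++ [σ] ∉ T)

/-- `T⁺ = T ∪ {wσ : w ∈ T, σ ∈ Σ}`. -/
def treePlus {Sg : Type} (T : Set (List Sg)) : Set (List Sg) :=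
  T ∪ {x | ∃ w ∈ T, ∃ σ : Sg, x = w ++ [σ]}

/-- Acceptance of the full-tree-pattern `p : T → A` by the finite-tree
automaton `𝒜(I, F)` (initial states `I`, final state `F`). -/
def FTAccepts {Sg A : Type} (𝒜 : URA Sg A) (I : Set 𝒜.S) (F : 𝒜.S)
    (T : Set (List Sg)) (p : List Sg → A) : Prop :=
  ∃ α : List Sg → 𝒜.S,
    (∀ w ∈ T, (α w, p w, fun σ => α (w ++ [σ])) ∈ 𝒜.T) ∧
    α [] ∈ I ∧
    ∀ w ∈ treePlus T, w ∉ T → α w = F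

/-- A Rabin automaton: an unrestricted Rabin automaton together with a set of
initial states and a family of accepting sets. -/
structure RabinAutomaton (Sg A : Type) where
  toURA : URA Sg A
  I : Set toURA.S
  Acc : Set (Set toURA.S)

/-- Acceptance by a Rabin automaton: a homomorphism realizing `f`, starting at
an initial state, and such that along every right-infinite word, the set of
states visited infinitely often belongs to the family of accepting sets. -/
def RabinAccepts {Sg A : Type} (𝒜 : RabinAutomaton Sg A) (f : List Sg → A) : Prop :=
  ∃ α : List Sg → 𝒜.toURA.S,
    (∀ w : List Sg, (α w, f w, fun σ => α (w ++ [σ])) ∈ 𝒜.toURA.T) ∧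
    α [] ∈ 𝒜.I ∧
    ∀ ω : ℕ → Sg,
      {s : 𝒜.toURA.S | ∀ N : ℕ, ∃ n ≥ N, α ((List.range n).map ω) = s} ∈ 𝒜.Acc


/-! ### Auxiliary lemmas for the proof -/

theorem shiftMap_shiftMap {Sg A : Type} (f : List Sg → A) (w u : List Sg) :
    shiftMap (shiftMap f w) u = shiftMap f (w ++ u) := by
  funext w'; simp [shiftMap, List.append_assoc]

theorem shiftMap_nil {Sg A : Type} (f : List Sg → A) : shiftMap f [] = f := rfl

theorem regular_card_finite {Sg A : Type} [Finite Sg] [Finite A] (N : ℕ) :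
    {f : List Sg → A | (shiftOrbit f).Finite ∧ (shiftOrbit f).ncard ≤ N}.Finite := by
  classical
  set decode : ((Fin (N+1) → Sg → Fin (N+1)) × (Fin (N+1) → A) × Fin (N+1)) → (List Sg → A) :=
    fun t w => t.2.1 (w.foldl t.1 t.2.2) with hdecode
  apply (Set.finite_range decode).subset
  rintro f ⟨hfin, hcard⟩
  have hmem : f ∈ shiftOrbit f := ⟨[], rfl⟩
  set l : List (List Sg → A) := hfin.toFinset.toList with hl
  have hlen : l.length ≤ N + 1 := by
    have h1 : l.length = hfin.toFinset.card := Finset.length_toList _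
    have h2 : hfin.toFinset.card = (shiftOrbit f).ncard :=
      (Set.ncard_eq_toFinset_card _ hfin).symm
    omega
  have hmeml : ∀ x, x ∈ l ↔ x ∈ shiftOrbit f := by
    intro x; rw [hl, Finset.mem_toList, Set.Finite.mem_toFinset]
  set e : Fin (N+1) → (List Sg → A) := fun i => l.getD i f with he
  have he1 : ∀ i, e i ∈ shiftOrbit f := by
    intro i
    by_cases h : (i : ℕ) < l.length
    · have : e i = l[(i:ℕ)] := List.getD_eq_getElem l f h
      rw [this, ← hmeml]
      exact List.getElem_mem h
    · have : e i = f := List.getD_eq_default l f (le_of_not_gt h)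
      rw [this]; exact hmem
  have he2 : ∀ x ∈ shiftOrbit f, ∃ i, e i = x := by
    intro x hx
    obtain ⟨j, hj, hjx⟩ := List.mem_iff_getElem.mp ((hmeml x).mpr hx)
    refine ⟨⟨j, lt_of_lt_of_le hj hlen⟩, ?_⟩
    show l.getD j f = x
    rw [List.getD_eq_getElem l f hj]; exact hjx
  have hstep : ∀ x ∈ shiftOrbit f, ∀ σ : Sg, shiftMap x [σ] ∈ shiftOrbit f := by
    rintro x ⟨w, rfl⟩ σ
    exact ⟨w ++ [σ], (shiftMap_shiftMap f w [σ]).symm⟩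
  choose δ hδ using fun i σ => he2 (shiftMap (e i) [σ]) (hstep _ (he1 i) σ)
  obtain ⟨s0, hs0⟩ := he2 f hmem
  refine ⟨(δ, fun i => e i [], s0), ?_⟩
  have key : ∀ w : List Sg, e (w.foldl δ s0) = shiftMap f w := by
    intro w
    induction w using List.reverseRecOn with
    | nil => simpa [shiftMap_nil] using hs0
    | append_singleton w σ ih =>
        rw [List.foldl_append]
        simp only [List.foldl_cons, List.foldl_nil]
        rw [hδ, ih, shiftMap_shiftMap]
  funext w
  have h1 : decode (δ, fun i => e i [], s0) w = e (w.foldl δ s0) [] := rfl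
  rw [h1, key w]
  simp [shiftMap]

theorem ca_orbit {Sg A B : Type} {X : Set (List Sg → A)} {τ : X → List Sg → B}
    {M : Finset (List Sg)} {μ : ({m : List Sg // m ∈ M} → A) → B}
    (hμ : ∀ (f : X) (w : List Sg), τ f w = μ (fun m => f.val (w ++ m.val)))
    (f : X) :
    shiftOrbit (τ f) ⊆
      (fun (h : List Sg → A) (w' : List Sg) => μ (fun m => h (w' ++ m.val))) '' shiftOrbit f.val := by
  rintro x ⟨w, rfl⟩
  refine ⟨shiftMap f.val w, ⟨w, rfl⟩, ?_⟩
  funext w'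
  simp [shiftMap, hμ, List.append_assoc]

theorem ca_regular {Sg A B : Type} {X : Set (List Sg → A)} {τ : X → List Sg → B}
    (hτ : IsCellularAutomaton X τ) (f : X) (hf : IsRegularConfig f.val) :
    IsRegularConfig (τ f) := by
  obtain ⟨M, μ, hμ⟩ := hτ
  exact (hf.image _).subset (ca_orbit hμ f)

theorem ca_ncard {Sg A B : Type} {X : Set (List Sg → A)} {τ : X → List Sg → B}
    {M : Finset (List Sg)} {μ : ({m : List Sg // m ∈ M} → A) → B}
    (hμ : ∀ (f : X) (w : List Sg), τ f w = μ (fun m => f.val (w ++ m.val)))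
    (f : X) (hf : (shiftOrbit f.val).Finite) :
    (shiftOrbit (τ f)).ncard ≤ (shiftOrbit f.val).ncard :=
  le_trans (Set.ncard_le_ncard (ca_orbit hμ f) (hf.image _)) (Set.ncard_image_le hf)

theorem ca_continuous {Sg A B : Type} [TopologicalSpace A] [DiscreteTopology A]
    [TopologicalSpace B]
    {X : Set (List Sg → A)} {τ : X → List Sg → B} (hτ : IsCellularAutomaton X τ) :
    Continuous τ := by
  obtain ⟨M, μ, hμ⟩ := hτ
  have h : τ = fun f => fun w => μ (fun m => f.val (w ++ m.val)) := by
    funext f w; exact hμ f w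
  rw [h]
  refine continuous_pi fun w => ?_
  exact continuous_of_discreteTopology.comp
    (continuous_pi fun m => (continuous_apply (w ++ m.val)).comp continuous_subtype_val)

theorem avoids_closed {Sg A : Type} [Finite Sg] [TopologicalSpace A] [DiscreteTopology A]
    (F : Set (TreeBlock Sg A)) : IsClosed (avoids F) := by
  have h : avoids F = ⋂ (w : List Sg), ⋂ (n : ℕ), {f : List Sg → A | blockAt f w n ∉ F} := by
    ext f; simp [avoids]
  rw [h]
  refine isClosed_iInter fun w => isClosed_iInter fun n => ?_
  haveI : Finite {u : List Sg // u.length < n + 1} := (List.finite_length_lt Sg (n+1)).to_subtype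
  have hc : Continuous (fun f : List Sg → A =>
      fun m : {u : List Sg // u.length < n + 1} => f (w ++ m.val)) :=
    continuous_pi fun m => continuous_apply _
  have h2 : {f : List Sg → A | blockAt f w n ∉ F} =
      (fun f : List Sg → A => fun m : {u : List Sg // u.length < n + 1} => f (w ++ m.val)) ⁻¹'
        {p | (⟨n, p⟩ : TreeBlock Sg A) ∉ F} := rfl
  rw [h2]
  exact (isClosed_discrete _).preimage hc

/-- Walk along a reversed word, replacing positions by representatives. -/
def repWalk {Sg : Type} (ρ : List Sg → List Sg) (v : List Sg) : List Sg → List Sg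
  | [] => v
  | σ :: t => ρ (repWalk ρ v t ++ [σ])

theorem repWalk_append {Sg : Type} (ρ : List Sg → List Sg) (v : List Sg) (l₁ l₂ : List Sg) :
    repWalk ρ v (l₂ ++ l₁) = repWalk ρ (repWalk ρ v l₁) l₂ := by
  induction l₂ with
  | nil => rfl
  | cons σ t ih => simp [repWalk, ih]

theorem repWalk_mem {Sg : Type} (ρ : List Sg → List Sg) (v : List Sg) (l : List Sg) :
    repWalk ρ v l = v ∨ repWalk ρ v l ∈ Set.range ρ := by
  cases l with
  | nil => left; rfl
  | cons σ t => right; exact ⟨_, rfl⟩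

theorem sft_dense_regular {Sg A : Type} [Finite Sg] [Finite A]
    (F : Set (TreeBlock Sg A)) (hF : F.Finite) (g : List Sg → A) (hg : g ∈ avoids F) (n : ℕ) :
    ∃ h ∈ avoids F, IsRegularConfig h ∧ ∀ u : List Sg, u.length ≤ n → h u = g u := by
  classical
  set k : ℕ := n ⊔ hF.toFinset.sup (fun b => b.1) with hk
  have hkn : n ≤ k := le_sup_left
  have hkF : ∀ b ∈ F, b.1 ≤ k := fun b hb =>
    le_sup_of_le_right (Finset.le_sup (by simpa [Set.Finite.mem_toFinset] using hb))
  haveI : Finite {u : List Sg // u.length < k + 1} := (List.finite_length_lt Sg (k+1)).to_subtype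
  set Bk : List Sg → ({u : List Sg // u.length < k + 1} → A) := fun v m => g (v ++ m.val) with hBk
  set ρ : List Sg → List Sg := fun v => Function.invFun Bk (Bk v) with hρ
  have hρB : ∀ v, Bk (ρ v) = Bk v := fun v => Function.invFun_eq ⟨v, rfl⟩
  have hρg : ∀ v u, u.length ≤ k → g (ρ v ++ u) = g (v ++ u) := fun v u hu =>
    congrFun (hρB v) ⟨u, Nat.lt_succ_of_le hu⟩
  set ψ : List Sg → List Sg := fun w => repWalk ρ (ρ []) w.reverse with hψ
  have hψnil : ψ [] = ρ [] := rfl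
  have hψstep : ∀ w σ, ψ (w ++ [σ]) = ρ (ψ w ++ [σ]) := by
    intro w σ
    show repWalk ρ (ρ []) (w ++ [σ]).reverse = _
    rw [List.reverse_append]
    rfl
  have keyA : ∀ u : List Sg, ∀ w m : List Sg, u.length + m.length ≤ k →
      g (ψ (w ++ u) ++ m) = g ((ψ w ++ u) ++ m) := by
    intro u
    induction u using List.reverseRecOn with
    | nil => intro w m _; simp
    | append_singleton u σ ih =>
      intro w m hm
      have h1 : ψ (w ++ (u ++ [σ])) = ρ (ψ (w ++ u) ++ [σ]) := by
        rw [← List.append_assoc]; exact hψstep (w ++ u) σ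
      have hmk : m.length ≤ k := by simp at hm; omega
      have hlen : u.length + ([σ] ++ m).length ≤ k := by simp at hm ⊢; omega
      calc g (ψ (w ++ (u ++ [σ])) ++ m) = g (ρ (ψ (w ++ u) ++ [σ]) ++ m) := by rw [h1]
    _ = g ((ψ (w ++ u) ++ [σ]) ++ m) := hρg _ m hmk
    _ = g (ψ (w ++ u) ++ ([σ] ++ m)) := by rw [List.append_assoc]
    _ = g ((ψ w ++ u) ++ ([σ] ++ m)) := ih w ([σ] ++ m) hlen
    _ = g ((ψ w ++ (u ++ [σ])) ++ m) := by simp [List.append_assoc]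
  set h : List Sg → A := fun w => g (ψ w) with hh
  have hpoint : ∀ w u : List Sg, u.length ≤ k → h (w ++ u) = g (ψ w ++ u) := by
    intro w u hu
    have := keyA u w [] (by simpa using hu)
    simpa using this
  refine ⟨h, ?_, ?_, ?_⟩
  · intro w n' hmem
    have hn' : n' ≤ k := hkF _ hmem
    have hbl : blockAt h w n' = blockAt g (ψ w) n' := by
      unfold blockAt
      refine congrArg (Sigma.mk n') ?_
      funext m
      exact hpoint w m.val (le_trans (Nat.lt_succ_iff.mp m.2) hn')
    rw [hbl] at hmem
    exact hg (ψ w) n' hmem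
  · have hsub : shiftOrbit h ⊆
        (fun v : List Sg => fun w' : List Sg => g (repWalk ρ v w'.reverse)) ''
          (insert (ρ []) (Set.range (Function.invFun Bk))) := by
      rintro x ⟨w, rfl⟩
      refine ⟨ψ w, ?_, ?_⟩
      · rcases repWalk_mem ρ (ρ []) w.reverse with h1 | h1
        · left; exact h1
        · right; obtain ⟨v, hv⟩ := h1; exact ⟨Bk v, hv⟩
      · funext w'
        show g (repWalk ρ (ψ w) w'.reverse) = h (w ++ w')
        rw [hh]
        show _ = g (ψ (w ++ w'))
        rw [hψ]
        show _ = g (repWalk ρ (ρ []) (w ++ w').reverse)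
        rw [List.reverse_append, repWalk_append]
    exact (((Set.finite_range (Function.invFun Bk)).insert (ρ [])).image _).subset hsub
  · intro u hu
    have h1 : h ([] ++ u) = g (ψ [] ++ u) := hpoint [] u (le_trans hu hkn)
    have h2 : g (ρ [] ++ u) = g ([] ++ u) := hρg [] u (le_trans hu hkn)
    simpa [hψnil] using h1.trans h2

/-- every injective cellular automaton `τ : X → X` on a sofic
tree shift is surjective. -/
theorem sofic_surjunctive {Sg A : Type} [Finite Sg] [Nonempty Sg] [Finite A]
    [TopologicalSpace A] [DiscreteTopology A]
    (X : Set (List Sg → A)) (hX : IsSofic X)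
    (τ : X → List Sg → A) (hτ : IsCellularAutomaton X τ)
    (him : ∀ f : X, τ f ∈ X) :
    Function.Injective τ → ∀ g ∈ X, ∃ f : X, τ f = g := by
  intro hinj g hgX
  classical
  obtain ⟨M, μ, hμ⟩ := hτ
  obtain ⟨C, hC, Y, τ', hSFT, hCA', hXr⟩ := hX
  haveI : Finite C := hC
  obtain ⟨F, hFfin, hYF⟩ := hSFT
  obtain ⟨M', μ', hμ'⟩ := hCA'
  letI : TopologicalSpace C := ⊥
  haveI : DiscreteTopology C := ⟨rfl⟩
  have hYclosed : IsClosed Y := hYF ▸ avoids_closed F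
  haveI : CompactSpace Y := isCompact_iff_compactSpace.mp hYclosed.isCompact
  have hτ'cont : Continuous τ' := ca_continuous ⟨M', μ', hμ'⟩
  have hXcomp : IsCompact X := hXr ▸ isCompact_range hτ'cont
  haveI : CompactSpace X := isCompact_iff_compactSpace.mp hXcomp
  have hτcont : Continuous τ := ca_continuous (X := X) ⟨M, μ, hμ⟩
  -- every regular configuration of `X` is in the image of `τ`
  have hreg_range : ∀ q ∈ X, IsRegularConfig q → ∃ f : X, τ f = q := by
    intro q hqX hqreg
    set N := (shiftOrbit q).ncard with hN
    set R : Set (List Sg → A) :=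
      X ∩ {f | (shiftOrbit f).Finite ∧ (shiftOrbit f).ncard ≤ N} with hR
    have hRfin : R.Finite := (regular_card_finite N).inter_of_right X
    haveI : Finite R := hRfin.to_subtype
    have hmapsto : ∀ f : R, τ ⟨f.val, f.2.1⟩ ∈ R := fun f =>
      ⟨him _, ca_regular ⟨M, μ, hμ⟩ _ f.2.2.1, le_trans (ca_ncard hμ _ f.2.2.1) f.2.2.2⟩
    set T : R → R := fun f => ⟨τ ⟨f.val, f.2.1⟩, hmapsto f⟩ with hT
    have hTinj : Function.Injective T := by
      intro a b hab
      have h1 : τ ⟨a.val, a.2.1⟩ = τ ⟨b.val, b.2.1⟩ := congrArg Subtype.val hab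
      have h2 : a.val = b.val := Subtype.mk_eq_mk.mp (hinj h1)
      exact Subtype.ext h2
    obtain ⟨f, hf⟩ := Finite.injective_iff_surjective.mp hTinj ⟨q, hqX, hqreg, le_refl N⟩
    exact ⟨⟨f.val, f.2.1⟩, congrArg Subtype.val hf⟩
  -- density of regular configurations of `X` near `g`
  set L := M'.sup List.length with hL
  have hdense : ∀ n : ℕ, ∃ q ∈ X, IsRegularConfig q ∧
      ∀ w : List Sg, w.length ≤ n → q w = g w := by
    intro n
    obtain ⟨y, hy⟩ : ∃ y : Y, τ' y = g := by rw [hXr] at hgX; exact hgX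
    have hyF : y.val ∈ avoids F := hYF ▸ y.2
    obtain ⟨h, hhF, hhreg, hhagree⟩ := sft_dense_regular F hFfin y.val hyF (n + L)
    have hhY : h ∈ Y := hYF ▸ hhF
    refine ⟨τ' ⟨h, hhY⟩, hXr ▸ ⟨⟨h, hhY⟩, rfl⟩, ca_regular ⟨M', μ', hμ'⟩ _ hhreg, ?_⟩
    intro w hw
    rw [hμ' ⟨h, hhY⟩ w, ← hy, hμ' y w]
    congr 1
    funext m
    apply hhagree
    have hm : m.val.length ≤ L := Finset.le_sup m.2
    have : (w ++ m.val).length = w.length + m.val.length := List.length_append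
    omega
  -- conclude by compactness
  set K : ℕ → Set X := fun n => {f : X | ∀ w : List Sg, w.length ≤ n → τ f w = g w} with hK
  have hKdec : ∀ i, K (i+1) ⊆ K i := fun i f hf w hw => hf w (le_trans hw (Nat.le_succ i))
  have hKne : ∀ i, (K i).Nonempty := by
    intro i
    obtain ⟨q, hqX, hqreg, hqagree⟩ := hdense i
    obtain ⟨f, hf⟩ := hreg_range q hqX hqreg
    exact ⟨f, fun w hw => by rw [hf]; exact hqagree w hw⟩
  have hKclosed : ∀ i, IsClosed (K i) := by
    intro i
    have h2 : K i = ⋂ (w : List Sg), ⋂ (_ : w.length ≤ i), (fun f : X => τ f w) ⁻¹' {g w} := by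
      ext f; simp [hK]
    rw [h2]
    exact isClosed_iInter fun w => isClosed_iInter fun _ =>
      IsClosed.preimage ((continuous_apply w).comp hτcont) (isClosed_discrete _)
  obtain ⟨f, hf⟩ := IsCompact.nonempty_iInter_of_sequence_nonempty_isCompact_isClosed K
    hKdec hKne ((hKclosed 0).isCompact) hKclosed
  refine ⟨f, ?_⟩
  funext w
  exact (Set.mem_iInter.mp hf w.length) w (le_refl _)
end

section
/- A tree shift X ⊆ A^{Σ*} is sofic if and only if it is recognized by a Rabin automaton (S, Σ, A, 𝒯, ℐ, 𝔉): the intersection of the class of Rabin-recognizable tree languages and the class of tree shifts is precisely the class of sofic tree shifts. -/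
/-! ### Auxiliary lemmas -/

instance finiteShortLists {Sg : Type} [Finite Sg] (n : ℕ) :
    Finite {w : List Sg // w.length < n} :=
  (List.finite_length_lt Sg n).to_subtype

/-- A closed set contains any configuration approximated to every depth. -/
lemma mem_of_closed_of_approx {Sg A : Type} [TopologicalSpace A] [DiscreteTopology A]
    {X : Set (List Sg → A)} (hc : IsClosed X) {f : List Sg → A}
    (h : ∀ n : ℕ, ∃ g ∈ X, ∀ u : List Sg, u.length ≤ n → g u = f u) : f ∈ X := by
  by_contra hf
  obtain ⟨I, u, hu, hsub⟩ := isOpen_pi_iff.mp hc.isOpen_compl f hf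
  obtain ⟨g, hgX, hg⟩ := h (I.sup List.length)
  exact hsub (fun a ha => (hg a (Finset.le_sup ha)).symm ▸ (hu a ha).2) hgX

/-- The shift of any unrestricted Rabin automaton is a sofic tree shift. -/
lemma ura_shift_sofic {Sg A : Type} [Finite Sg] [Nonempty Sg] [Finite A]
    (𝒜 : URA Sg A) : IsSofic 𝒜.shift := by
  classical
  set C := 𝒜.S × A with hC
  set F : Set (TreeBlock Sg C) :=
    {b | ∃ h : b.1 = 1, ((b.2 ⟨[], by simp⟩).1, (b.2 ⟨[], by simp⟩).2,
        fun σ => (b.2 ⟨[σ], by simp [h]⟩).1) ∉ 𝒜.T} with hF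
  have hFfin : F.Finite := by
    have hsub : F ⊆ (fun p : ({w : List Sg // w.length < 1 + 1} → C) =>
        (⟨1, p⟩ : TreeBlock Sg C)) '' Set.univ := by
      rintro ⟨n, p⟩ ⟨h, -⟩
      dsimp at h
      subst h
      exact ⟨p, trivial, rfl⟩
    exact (Set.finite_univ.image _).subset hsub
  have hY : ∀ g : List Sg → C, g ∈ avoids F ↔
      ∀ w, ((g w).1, (g w).2, fun σ => (g (w ++ [σ])).1) ∈ 𝒜.T := by
    intro g
    constructor
    · intro hg w
      by_contra hbad
      exact hg w 1 ⟨rfl, by simpa [blockAt] using hbad⟩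
    · intro hg w n hn
      obtain ⟨h1, hbad⟩ := hn
      have h1' : n = 1 := h1
      subst h1'
      exact hbad (by simpa [blockAt] using hg w)
  refine ⟨C, inferInstance, avoids F,
    fun g w => (g.val w).2, ⟨F, hFfin, rfl⟩,
    ⟨{[]}, fun p => (p ⟨[], by simp⟩).2, ?_⟩, ?_⟩
  · intro f w
    show (f.val w).2 = (f.val (w ++ [])).2
    rw [List.append_nil]
  · ext f
    constructor
    · rintro ⟨α, hα⟩
      exact ⟨⟨fun w => (α w, f w), (hY _).mpr (fun w => hα w)⟩, rfl⟩
    · rintro ⟨g, rfl⟩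
      exact ⟨fun w => (g.val w).1, fun w => (hY g.val).mp g.property w⟩

/-- Every sofic tree shift is the shift of an unrestricted Rabin automaton. -/
lemma sofic_to_ura {Sg A : Type} [Finite Sg] [Nonempty Sg] {X : Set (List Sg → A)}
    (h : IsSofic X) : ∃ 𝒜 : URA Sg A, X = 𝒜.shift := by
  classical
  obtain ⟨C, hC, Y, τ, ⟨F, hFfin, rfl⟩, ⟨M, μ, hμ⟩, rfl⟩ := h
  by_cases hCe : Nonempty C
  · -- main case
    obtain ⟨k, hk0, hkF, hkM⟩ : ∃ k : ℕ, 0 < k ∧ (∀ b ∈ F, b.1 + 1 ≤ k) ∧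
        (∀ m ∈ M, m.length < k) := by
      obtain ⟨N1, hN1⟩ := (hFfin.image Sigma.fst).bddAbove
      refine ⟨max N1 (M.sup List.length) + 1, Nat.succ_pos _, ?_, ?_⟩
      · intro b hb
        have := hN1 ⟨b, hb, rfl⟩
        omega
      · intro m hm
        have := Finset.le_sup (f := List.length) hm
        omega
    refine ⟨⟨{w : List Sg // w.length < k} → C,
      {t | (∀ (σ : Sg) (u : List Sg) (h1 : u.length + 1 < k),
            t.2.2 σ ⟨u, by omega⟩ = t.1 ⟨σ :: u, by simpa using h1⟩) ∧
           (∀ (n : ℕ) (hn : n + 1 ≤ k),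
            (⟨n, fun m => t.1 ⟨m.val, lt_of_lt_of_le m.2 hn⟩⟩ : TreeBlock Sg C) ∉ F) ∧
           t.2.1 = μ (fun m => t.1 ⟨m.val, hkM m.val m.2⟩)}⟩, ?_⟩
    ext f
    constructor
    · rintro ⟨⟨g, hg⟩, rfl⟩
      refine ⟨fun w => (fun m : {w : List Sg // w.length < k} => g (w ++ m.val)), fun w => ⟨?_, ?_, ?_⟩⟩
      · intro σ u h1
        show g (w ++ [σ] ++ u) = g (w ++ σ :: u)
        rw [List.append_assoc]
        rfl
      · intro n hn
        exact hg w n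
      · exact hμ ⟨g, hg⟩ w
    · rintro ⟨α, hα⟩
      have hpat : ∀ (u : List Sg) (w : List Sg) (hu : u.length < k),
          α w ⟨u, hu⟩ = α (w ++ u) ⟨[], hk0⟩ := by
        intro u
        induction u with
        | nil => intro w hu; rw [List.append_nil]
        | cons σ u ih =>
          intro w hu
          have h1 : u.length + 1 < k := by simpa using hu
          calc α w ⟨σ :: u, hu⟩ = α (w ++ [σ]) ⟨u, by omega⟩ := ((hα w).1 σ u h1).symm
            _ = α (w ++ [σ] ++ u) ⟨[], hk0⟩ := ih _ _
            _ = α (w ++ σ :: u) ⟨[], hk0⟩ := by rw [List.append_assoc]; rfl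
      set g : List Sg → C := fun w => α w ⟨[], hk0⟩ with hgdef
      have hgY : g ∈ avoids F := by
        intro w n hF
        have hn := hkF _ hF
        apply (hα w).2.1 n hn
        have heq : (⟨n, fun m => α w ⟨m.val, lt_of_lt_of_le m.2 hn⟩⟩ : TreeBlock Sg C)
            = blockAt g w n := by
          apply congrArg (Sigma.mk n)
          funext m
          exact hpat m.val w _
        rw [heq]
        exact hF
      refine ⟨⟨g, hgY⟩, ?_⟩
      funext w
      have h3 := (hα w).2.2
      have h4 : (fun m : {m : List Sg // m ∈ M} => α w ⟨m.val, hkM m.val m.2⟩)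
          = fun m => g (w ++ m.val) := funext fun m => hpat m.val w _
      rw [hμ ⟨g, hgY⟩ w, ← h4, ← h3]
  · -- C is empty: both sides empty
    refine ⟨⟨Unit, ∅⟩, ?_⟩
    ext f
    constructor
    · rintro ⟨⟨g, hg⟩, rfl⟩
      exact ((not_nonempty_iff.mp hCe).false (g [])).elim
    · rintro ⟨α, hα⟩
      exact absurd (hα []) (Set.notMem_empty _)

/-- A run on `f` satisfying all three Rabin acceptance conditions. -/
def GoodRun {Sg A : Type} (𝒜 : RabinAutomaton Sg A) (f : List Sg → A)
    (α : List Sg → 𝒜.toURA.S) : Prop :=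
  (∀ w : List Sg, (α w, f w, fun σ => α (w ++ [σ])) ∈ 𝒜.toURA.T) ∧
  α [] ∈ 𝒜.I ∧
  ∀ ω : ℕ → Sg,
    {s : 𝒜.toURA.S | ∀ N : ℕ, ∃ n ≥ N, α ((List.range n).map ω) = s} ∈ 𝒜.Acc

/-- The transition bundles used by some accepting run of the Rabin automaton. -/
def usedT {Sg A : Type} (𝒜 : RabinAutomaton Sg A) :
    Set (𝒜.toURA.S × A × (Sg → 𝒜.toURA.S)) :=
  {t | ∃ f α, GoodRun 𝒜 f α ∧ ∃ w : List Sg, t = (α w, f w, fun σ => α (w ++ [σ]))}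

open scoped Classical in
/-- Replace the values of `base` strictly below `w` by values given by `sub`. -/
noncomputable def graftPatch {Sg γ : Type} (w : List Sg) (base : List Sg → γ)
    (sub : Sg → List Sg → γ) (v : List Sg) : γ :=
  if w <+: v then
    match v.drop w.length with
    | [] => base v
    | σ :: u => sub σ u
  else base v

lemma graftPatch_self {Sg γ : Type} (w : List Sg) (base : List Sg → γ)
    (sub : Sg → List Sg → γ) : graftPatch w base sub w = base w := by
  unfold graftPatch
  rw [if_pos (List.prefix_refl w), List.drop_length]

lemma graftPatch_of_not_prefix {Sg γ : Type} {w v : List Sg} (base : List Sg → γ)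
    (sub : Sg → List Sg → γ) (hp : ¬ w <+: v) :
    graftPatch w base sub v = base v := by
  unfold graftPatch
  rw [if_neg hp]

lemma graftPatch_append {Sg γ : Type} (w : List Sg) (base : List Sg → γ)
    (sub : Sg → List Sg → γ) (σ : Sg) (u : List Sg) :
    graftPatch w base sub (w ++ σ :: u) = sub σ u := by
  unfold graftPatch
  rw [if_pos (List.prefix_append w (σ :: u)), List.drop_left]

lemma prefix_cases {Sg : Type} {w v : List Sg} (hp : w <+: v) :
    v = w ∨ ∃ σ u, v = w ++ σ :: u := by
  obtain ⟨t, rfl⟩ := hp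
  cases t with
  | nil => left; exact List.append_nil w
  | cons σ u => right; exact ⟨σ, u, rfl⟩

/-- The grafting lemma: any configuration with a run using only used transition
bundles is approximated to every depth by accepted configurations. -/
lemma graft {Sg A : Type} [Nonempty Sg] (𝒜 : RabinAutomaton Sg A) :
    ∀ (n : ℕ) (f : List Sg → A) (α : List Sg → 𝒜.toURA.S),
    (∀ w : List Sg, (α w, f w, fun σ => α (w ++ [σ])) ∈ usedT 𝒜) →
    ∃ (h : List Sg → A) (β : List Sg → 𝒜.toURA.S) (w : List Sg),
      GoodRun 𝒜 h β ∧ (∀ u : List Sg, u.length ≤ n → h (w ++ u) = f u) ∧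
      (∀ u : List Sg, u.length ≤ n + 1 → β (w ++ u) = α u) := by
  intro n
  induction n with
  | zero =>
    intro f α hfα
    obtain ⟨h, β, hGood, w, ht⟩ := hfα []
    have hα0 : β w = α [] := (congrArg Prod.fst ht).symm
    have hf0 : h w = f [] := (congrArg (fun t => t.2.1) ht).symm
    have hβ1 : ∀ σ, β (w ++ [σ]) = α [σ] :=
      fun σ => (congrFun (congrArg (fun t => t.2.2) ht) σ).symm
    refine ⟨h, β, w, hGood, ?_, ?_⟩
    · intro u hu
      have : u = [] := List.length_eq_zero_iff.mp (Nat.le_zero.mp hu)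
      subst this
      rw [List.append_nil]
      exact hf0
    · intro u hu
      match u, hu with
      | [], _ => rw [List.append_nil]; exact hα0
      | [σ], _ => exact hβ1 σ
      | σ :: τ :: u, hu => simp at hu
  | succ n ih =>
    intro f α hfα
    obtain ⟨h, β, hGood, w, ht⟩ := hfα []
    have hα0 : β w = α [] := (congrArg Prod.fst ht).symm
    have hf0 : h w = f [] := (congrArg (fun t => t.2.1) ht).symm
    have hβ1 : ∀ σ, β (w ++ [σ]) = α [σ] :=
      fun σ => (congrFun (congrArg (fun t => t.2.2) ht) σ).symm
    have hσ : ∀ σ : Sg, ∃ hh ββ ww, GoodRun 𝒜 hh ββ ∧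
        (∀ u : List Sg, u.length ≤ n → hh (ww ++ u) = f ([σ] ++ u)) ∧
        (∀ u : List Sg, u.length ≤ n + 1 → ββ (ww ++ u) = α ([σ] ++ u)) := by
      intro σ
      apply ih (fun v => f ([σ] ++ v)) (fun v => α ([σ] ++ v))
      intro v
      have := hfα ([σ] ++ v)
      simpa [List.append_assoc] using this
    choose hh ββ ww hGood' hAgrF hAgrS using hσ
    set h' : List Sg → A := graftPatch w h (fun σ u => hh σ (ww σ ++ u)) with hh'
    set β' : List Sg → 𝒜.toURA.S := graftPatch w β (fun σ u => ββ σ (ww σ ++ u)) with hβ'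
    have hβ'child : ∀ σ : Sg, β' (w ++ [σ]) = β (w ++ [σ]) := by
      intro σ
      rw [hβ', graftPatch_append, List.append_nil]
      rw [hβ1 σ]
      have := hAgrS σ [] (Nat.zero_le _)
      rw [List.append_nil] at this
      exact this
    refine ⟨h', β', w, ⟨?_, ?_, ?_⟩, ?_, ?_⟩
    · -- transitions
      intro v
      by_cases hp : w <+: v
      · rcases prefix_cases hp with rfl | ⟨σ, u, rfl⟩
        · have e1 : β' v = β v := graftPatch_self _ _ _
          have e2 : h' v = h v := graftPatch_self _ _ _
          have e3 : (fun σ => β' (v ++ [σ])) = fun σ => β (v ++ [σ]) :=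
            funext fun σ => hβ'child σ
          rw [e1, e2, e3]
          exact hGood.1 v
        · have e1 : β' (w ++ σ :: u) = ββ σ (ww σ ++ u) := graftPatch_append _ _ _ _ _
          have e2 : h' (w ++ σ :: u) = hh σ (ww σ ++ u) := graftPatch_append _ _ _ _ _
          have e3 : (fun τ => β' ((w ++ σ :: u) ++ [τ])) =
              fun τ => ββ σ ((ww σ ++ u) ++ [τ]) := by
            funext τ
            have hv : (w ++ σ :: u) ++ [τ] = w ++ σ :: (u ++ [τ]) := by simp
            rw [hv, hβ', graftPatch_append, List.append_assoc]
          rw [e1, e2, e3]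
          exact (hGood' σ).1 (ww σ ++ u)
      · have e1 : β' v = β v := graftPatch_of_not_prefix _ _ hp
        have e2 : h' v = h v := graftPatch_of_not_prefix _ _ hp
        have e3 : (fun τ => β' (v ++ [τ])) = fun τ => β (v ++ [τ]) := by
          funext τ
          by_cases hq : w <+: v ++ [τ]
          · have hlen : ¬ w.length ≤ v.length := by
              intro hle
              exact hp (List.prefix_of_prefix_length_le hq (List.prefix_append v [τ]) (by simpa using hle))
            have hwe : w = v ++ [τ] := hq.eq_of_length (by
              have := hq.length_le
              simp at this ⊢
              omega)
            rw [← hwe, hβ', graftPatch_self, hwe]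
          · exact graftPatch_of_not_prefix _ _ hq
        rw [e1, e2, e3]
        exact hGood.1 v
    · -- initial state
      have : β' [] = β [] := by
        by_cases hp : w <+: ([] : List Sg)
        · have : w = [] := List.prefix_nil.mp hp
          subst this
          exact graftPatch_self _ _ _
        · exact graftPatch_of_not_prefix _ _ hp
      rw [this]
      exact hGood.2.1
    · -- branch condition
      intro ω
      by_cases hw : (List.range w.length).map ω = w
      · -- the branch passes through w
        set L := w.length with hL
        set σ0 := ω L with hσ0
        set K := (ww σ0).length with hK
        have d : Sg := Classical.arbitrary Sg
        set ω' : ℕ → Sg := fun i => if i < K then (ww σ0).getD i d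
          else ω (L + 1 + (i - K)) with hω'
        have q1 : (List.range K).map ω' = ww σ0 := by
          apply List.ext_getElem (by simp [hK])
          intro i h1 h2
          have hiK : i < K := by simpa using h1
          simp only [List.getElem_map, List.getElem_range, hω']
          rw [if_pos hiK]
          exact List.getD_eq_getElem _ _ h2
        have q2 : ∀ k, (List.range (K + k)).map ω' =
            ww σ0 ++ (List.range k).map (fun j => ω (L + 1 + j)) := by
          intro k
          rw [List.range_add, List.map_append, q1, List.map_map]
          have hfun : (ω' ∘ fun x => K + x) = fun j => ω (L + 1 + j) := by
            funext j
            show ω' (K + j) = ω (L + 1 + j)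
            rw [hω']
            simp only []
            rw [if_neg (by omega)]
            congr 1
            omega
          rw [hfun]
        have p2 : ∀ k, (List.range (L + 1 + k)).map ω =
            w ++ σ0 :: (List.range k).map (fun j => ω (L + 1 + j)) := by
          intro k
          rw [List.range_add, List.map_append, List.map_map]
          have hfirst : (List.range (L + 1)).map ω = w ++ [σ0] := by
            rw [show L + 1 = (L).succ from rfl, List.range_succ, List.map_append, hw]
            rfl
          rw [hfirst, List.append_assoc]
          rfl
        have key : ∀ k, β' ((List.range (L + 1 + k)).map ω) =
            ββ σ0 ((List.range (K + k)).map ω') := by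
          intro k
          rw [p2 k, hβ', graftPatch_append, q2 k]
        have hset : {s | ∀ N, ∃ m ≥ N, β' ((List.range m).map ω) = s} =
            {s | ∀ N, ∃ m ≥ N, ββ σ0 ((List.range m).map ω') = s} := by
          ext s
          simp only [Set.mem_setOf_eq]
          constructor
          · intro hs N
            obtain ⟨m, hm, he⟩ := hs (L + 1 + N)
            refine ⟨K + (m - (L + 1)), by omega, ?_⟩
            rw [← key (m - (L + 1)), show L + 1 + (m - (L + 1)) = m by omega]
            exact he
          · intro hs N
            obtain ⟨m, hm, he⟩ := hs (K + N)
            refine ⟨L + 1 + (m - K), by omega, ?_⟩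
            rw [key (m - K), show K + (m - K) = m by omega]
            exact he
        rw [hset]
        exact (hGood' σ0).2.2 ω'
      · -- the branch avoids the subtree below w
        have hnp : ∀ m, ¬ w <+: (List.range m).map ω := by
          intro m hp
          apply hw
          have hlw : w.length ≤ m := by simpa using hp.length_le
          have h1 : ((List.range m).map ω).take w.length = w :=
            (List.prefix_iff_eq_take.mp hp).symm
          have h2 : ((List.range m).map ω).take w.length =
              (List.range w.length).map ω := by
            rw [← List.map_take, List.take_range, Nat.min_eq_left hlw]
          rw [← h2, h1]
        have hrw : ∀ m, β' ((List.range m).map ω) = β ((List.range m).map ω) :=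
          fun m => graftPatch_of_not_prefix _ _ (hnp m)
        simp only [hrw]
        exact hGood.2.2 ω
    · -- label agreement
      intro u hu
      match u, hu with
      | [], _ =>
        rw [List.append_nil]
        rw [hh', graftPatch_self]
        exact hf0
      | σ :: u, hu =>
        have hu' : u.length ≤ n := by simpa using hu
        rw [hh', graftPatch_append]
        exact hAgrF σ u hu'
    · -- state agreement
      intro u hu
      match u, hu with
      | [], _ =>
        rw [List.append_nil, hβ', graftPatch_self]
        exact hα0
      | σ :: u, hu =>
        have hu' : u.length ≤ n + 1 := by simpa using hu
        rw [hβ', graftPatch_append]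
        exact hAgrS σ u hu'

/-- a tree shift is sofic iff it is recognized by a Rabin
automaton. -/
theorem sofic_iff_rabin_recognizable {Sg A : Type} [Finite Sg] [Nonempty Sg]
    [Finite A] [TopologicalSpace A] [DiscreteTopology A]
    (X : Set (List Sg → A)) (hX : IsTreeShift X) :
    IsSofic X ↔ ∃ 𝒜 : RabinAutomaton Sg A, X = {f | RabinAccepts 𝒜 f} := by
  constructor
  · -- sofic ⇒ Rabin-recognizable, with all states initial and all sets accepting
    intro hs
    obtain ⟨𝒜, hXs⟩ := sofic_to_ura hs
    refine ⟨⟨𝒜, Set.univ, Set.univ⟩, ?_⟩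
    rw [hXs]
    ext f
    constructor
    · rintro ⟨α, hα⟩
      exact ⟨α, hα, Set.mem_univ _, fun ω => Set.mem_univ _⟩
    · rintro ⟨α, h1, -, -⟩
      exact ⟨α, h1⟩
  · -- Rabin-recognizable ⇒ sofic
    rintro ⟨𝒜, hXA⟩
    have key : X = URA.shift (⟨𝒜.toURA.S, usedT 𝒜⟩ : URA Sg A) := by
      apply Set.Subset.antisymm
      · intro f hf
        rw [hXA] at hf
        obtain ⟨α, h1, h2, h3⟩ := hf
        exact ⟨α, fun w => ⟨f, α, ⟨h1, h2, h3⟩, w, rfl⟩⟩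
      · intro f hf
        obtain ⟨α, hα⟩ := hf
        apply mem_of_closed_of_approx hX.1
        intro n
        obtain ⟨h, β, w, hGood, hagF, hagS⟩ := graft 𝒜 n f α hα
        have hhX : h ∈ X := by
          rw [hXA]
          exact ⟨β, hGood.1, hGood.2.1, hGood.2.2⟩
        exact ⟨shiftMap h w, hX.2 h hhX w, fun u hu => hagF u hu⟩
    rw [key]
    exact ura_shift_sofic _
end
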